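/- If κ is an infinite cardinal, α is an ordinal, and X is a left-separated topological space with κ·α ≤ ord_ℓ(X) ≤ κ·(α+1), then there is a closed subspace Y ⊆ X with ord_ℓ(Y) = κ·α. -/

import Mathlib

universe u

open Cardinal Ordinal

section AuxPrivate

open Set


/-- Transfer a left-separating type along a homeomorphism. -/
lemma isLeftSepType_homeo' {X : Type u} {Z : Type u} [TopologicalSpace X] [TopologicalSpace Z]
    (e : X ≃ₜ Z) {o : Ordinal.{u}}
    (h : ∃ (r : X → X → Prop) (hwo : IsWellOrder X r),
      (∀ x : X, IsClosed {y | r y x}) ∧ o = @Ordinal.type X r hwo) :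
    ∃ (r : Z → Z → Prop) (hwo : IsWellOrder Z r),
      (∀ x : Z, IsClosed {y | r y x}) ∧ o = @Ordinal.type Z r hwo := by
  obtain ⟨r, hwo, hcl, ho⟩ := h
  refine ⟨(e.symm : Z → X) ⁻¹'o r, (RelIso.preimage e.symm.toEquiv r).toRelEmbedding.isWellOrder,
    fun z => ?_, ?_⟩
  · have : {y : Z | ((e.symm : Z → X) ⁻¹'o r) y z} = (e.symm : Z → X) ⁻¹' {y | r y (e.symm z)} :=
      rfl
    rw [this]
    exact (hcl _).preimage e.symm.continuous
  · rw [ho]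
    exact ((RelIso.preimage e.symm.toEquiv r).ordinal_type_eq).symm

/-- If `Y` is downward closed for a well-order `r`, then the types add up. -/
lemma type_subrel_add_compl {X : Type u} (r : X → X → Prop) [hwo : IsWellOrder X r]
    (Y : Set X) (hdc : ∀ a b, r a b → b ∈ Y → a ∈ Y) :
    Ordinal.type (Subrel r (· ∈ Y)) + Ordinal.type (Subrel r (· ∈ Yᶜ)) = Ordinal.type r := by
  classical
  rw [← Ordinal.type_sum_lex]
  refine (RelIso.ordinal_type_eq ⟨Equiv.Set.sumCompl Y, ?_⟩)
  rintro (a | a) (b | b) <;>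
    simp only [Equiv.Set.sumCompl_apply_inl, Equiv.Set.sumCompl_apply_inr]
  · constructor
    · exact fun h => Sum.Lex.inl h
    · rintro (_ | _ | h); assumption
  · constructor
    · intro _; exact Sum.Lex.sep a b
    · intro _
      rcases trichotomous_of r a.1 b.1 with h | h | h
      · exact h
      · exact absurd (h ▸ a.2) b.2
      · exact absurd (hdc _ _ h a.2) b.2
  · constructor
    · intro h; exact absurd (hdc _ _ h b.2) a.2
    · rintro (_ | _ | _)
  · constructor
    · exact fun h => Sum.Lex.inr h
    · rintro (_ | _ | h); assumption

/-- Glue a left-separating order on a closed downward-closed set `Y` with the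
restriction of a left-separating order on `X` to `Yᶜ`. -/
lemma leftSep_glue {X : Type u} [TopologicalSpace X]
    (r : X → X → Prop) [hwo : IsWellOrder X r] (hrcl : ∀ x : X, IsClosed {y | r y x})
    (Y : Set X) (hYc : IsClosed Y) (hdc : ∀ a b, r a b → b ∈ Y → a ∈ Y)
    (s : Y → Y → Prop) [hswo : IsWellOrder Y s] (hscl : ∀ y : Y, IsClosed {z | s z y}) :
    ∃ (t : X → X → Prop) (hwo' : IsWellOrder X t),
      (∀ x : X, IsClosed {y | t y x}) ∧
      @Ordinal.type X t hwo' = Ordinal.type s + Ordinal.type (Subrel r (· ∈ Yᶜ)) := by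
  classical
  set e := Equiv.Set.sumCompl Y with he
  set q : (↥Y ⊕ ↥(Yᶜ)) → (↥Y ⊕ ↥(Yᶜ)) → Prop := Sum.Lex s (Subrel r (· ∈ Yᶜ)) with hq
  refine ⟨(e.symm : X → ↥Y ⊕ ↥(Yᶜ)) ⁻¹'o q,
    (RelIso.preimage e.symm q).toRelEmbedding.isWellOrder, ?_, ?_⟩
  · intro b
    by_cases hb : b ∈ Y
    · have hset : {a : X | ((e.symm : X → _) ⁻¹'o q) a b} = Subtype.val '' {z : Y | s z ⟨b, hb⟩} := by
        ext a
        simp only [Set.mem_setOf_eq, Order.Preimage, Set.mem_image]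
        rw [Equiv.Set.sumCompl_symm_apply_of_mem hb]
        by_cases ha : a ∈ Y
        · rw [Equiv.Set.sumCompl_symm_apply_of_mem ha]
          constructor
          · rintro (h | _ | _)
            · exact ⟨⟨a, ha⟩, ‹_›, rfl⟩
          · rintro ⟨z, hz, rfl⟩
            have : z = ⟨z.1, ha⟩ := Subtype.ext rfl
            exact Sum.Lex.inl (this ▸ hz)
        · rw [Equiv.Set.sumCompl_symm_apply_of_notMem ha]
          constructor
          · rintro (_ | _ | _)
          · rintro ⟨z, _, rfl⟩; exact absurd z.2 ha
      rw [hset]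
      exact hYc.isClosedEmbedding_subtypeVal.isClosedMap _ (hscl ⟨b, hb⟩)
    · have hset : {a : X | ((e.symm : X → _) ⁻¹'o q) a b} = {a | r a b} := by
        have hYb : ∀ a ∈ Y, r a b := by
          intro a ha
          rcases trichotomous_of r a b with h | h | h
          · exact h
          · exact absurd (h ▸ ha) hb
          · exact absurd (hdc _ _ h ha) hb
        ext a
        simp only [Set.mem_setOf_eq, Order.Preimage]
        rw [Equiv.Set.sumCompl_symm_apply_of_notMem hb]
        by_cases ha : a ∈ Y
        · rw [Equiv.Set.sumCompl_symm_apply_of_mem ha]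
          exact ⟨fun _ => hYb a ha, fun _ => Sum.Lex.sep _ _⟩
        · rw [Equiv.Set.sumCompl_symm_apply_of_notMem ha]
          constructor
          · rintro (_ | h | _); exact h
          · intro h; exact Sum.Lex.inr h
      rw [hset]
      exact hrcl b
  · rw [(RelIso.preimage e.symm q).ordinal_type_eq]
    exact Ordinal.type_sum_lex s (Subrel r (· ∈ Yᶜ))

/-- Absorption arithmetic: if `μ < κ.ord * α` then `μ + κ.ord ≤ κ.ord * α`. -/
lemma mu_add_ord_le {κ : Cardinal.{u}} (hκ : Cardinal.aleph0 ≤ κ) {μ α : Ordinal.{u}}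
    (h : μ < κ.ord * α) : μ + κ.ord ≤ κ.ord * α := by
  have hκ0 : κ.ord ≠ 0 := by
    simp only [ne_eq, Cardinal.ord_eq_zero]
    exact fun h0 => by simp [h0] at hκ; exact (Cardinal.aleph0_ne_zero hκ)
  have hγ : μ / κ.ord < α := (Ordinal.div_lt hκ0).2 h
  have habs : μ % κ.ord + κ.ord = κ.ord :=
    Ordinal.principal_add_iff_add_left_eq_self.mp (isPrincipal_add_ord hκ) _
      (Ordinal.mod_lt μ hκ0)
  calc μ + κ.ord = κ.ord * (μ / κ.ord) + (μ % κ.ord) + κ.ord := by rw [Ordinal.div_add_mod]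
    _ = κ.ord * (μ / κ.ord) + (μ % κ.ord + κ.ord) := by rw [add_assoc]
    _ = κ.ord * (μ / κ.ord) + κ.ord := by rw [habs]
    _ = κ.ord * (μ / κ.ord + 1) := by rw [mul_add_one]
    _ ≤ κ.ord * α := by
        apply mul_le_mul_right
        rw [Ordinal.add_one_eq_succ]
        exact Order.succ_le_of_lt hγ

end AuxPrivate

/-- `o` is the order type of some left-separating well-ordering of `X`:
a well-ordering all of whose initial segments are closed. -/
def IsLeftSepType (X : Type u) [TopologicalSpace X] (o : Ordinal.{u}) : Prop :=
  ∃ (r : X → X → Prop) (hwo : IsWellOrder X r),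
    (∀ x : X, IsClosed {y | r y x}) ∧ o = @Ordinal.type X r hwo

/-- A space is left-separated if it admits a left-separating well-ordering. -/
def IsLeftSeparated (X : Type u) [TopologicalSpace X] : Prop :=
  ∃ o, IsLeftSepType X o

/-- The left-separating type of a space: the minimum of the order types of its
left-separating well-orderings. -/
noncomputable def ordL (X : Type u) [TopologicalSpace X] : Ordinal.{u} :=
  sInf {o | IsLeftSepType X o}

lemma isLeftSepType_univ_iff {X : Type u} [TopologicalSpace X] {o : Ordinal.{u}} :
    IsLeftSepType ↥(Set.univ : Set X) o ↔ IsLeftSepType X o :=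
  ⟨fun h => isLeftSepType_homeo' (Homeomorph.Set.univ X) h,
   fun h => isLeftSepType_homeo' (Homeomorph.Set.univ X).symm h⟩

lemma ordL_univ (X : Type u) [TopologicalSpace X] :
    ordL ↥(Set.univ : Set X) = ordL X := by
  unfold ordL
  congr 1
  ext o
  exact isLeftSepType_univ_iff

theorem stmt_5 (κ : Cardinal.{0}) (hκ : Cardinal.aleph0 ≤ κ) (α : Ordinal.{0})
    (X : Type) [TopologicalSpace X] (hX : IsLeftSeparated X)
    (h1 : κ.ord * α ≤ ordL X) (h2 : ordL X ≤ κ.ord * (α + 1)) :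
    ∃ Y : Set X, IsClosed Y ∧ IsLeftSeparated ↥Y ∧ ordL ↥Y = κ.ord * α := by
  have hmem : IsLeftSepType X (ordL X) := csInf_mem hX
  rcases eq_or_lt_of_le h1 with heq | hlt
  · -- ordL X = κ.ord * α : take Y = univ
    refine ⟨Set.univ, isClosed_univ, ?_, ?_⟩
    · exact ⟨ordL X, isLeftSepType_univ_iff.2 hmem⟩
    · rw [ordL_univ, ← heq]
  · -- κ.ord * α < ordL X
    obtain ⟨r, hwo, hrcl, hrtype⟩ := hmem
    obtain ⟨x, hx⟩ := Ordinal.typein_surj r (show κ.ord * α < Ordinal.type r from hrtype ▸ hlt)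
    set Y : Set X := {y | r y x} with hY
    have hYc : IsClosed Y := hrcl x
    have hdc : ∀ a b, r a b → b ∈ Y → a ∈ Y := fun a b hab hb => IsTrans.trans _ _ _ hab hb
    have hsubtype : Ordinal.type (Subrel r (· ∈ Y)) = κ.ord * α := by
      exact (Ordinal.type_subrel r x).trans hx
    -- upper bound: Subrel r Y is a left-separating order on Y of type κ.ord * α
    have hYsep : IsLeftSepType ↥Y (κ.ord * α) := by
      refine ⟨Subrel r (· ∈ Y), inferInstance, fun w => ?_, hsubtype.symm⟩
      have : {z : ↥Y | Subrel r (· ∈ Y) z w} = Subtype.val ⁻¹' {a : X | r a w.1} := rfl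
      rw [this]
      exact (hrcl w.1).preimage continuous_subtype_val
    have hle : ordL ↥Y ≤ κ.ord * α := csInf_le' hYsep
    refine ⟨Y, hYc, ⟨_, hYsep⟩, ?_⟩
    -- lower bound
    by_contra hne
    have hμlt : ordL ↥Y < κ.ord * α := lt_of_le_of_ne hle hne
    have hne' : {o | IsLeftSepType ↥Y o}.Nonempty := ⟨_, hYsep⟩
    have hmemY : IsLeftSepType ↥Y (ordL ↥Y) := csInf_mem hne'
    obtain ⟨s, hswo, hscl, hstype⟩ := hmemY
    obtain ⟨t, htwo, htcl, httype⟩ := leftSep_glue r hrcl Y hYc hdc s hscl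
    have hX_le : ordL X ≤ ordL ↥Y + Ordinal.type (Subrel r (· ∈ Yᶜ)) := by
      apply csInf_le'
      exact ⟨t, htwo, htcl, by rw [httype, hstype]⟩
    have hsum : κ.ord * α + Ordinal.type (Subrel r (· ∈ Yᶜ)) = ordL X := by
      rw [← hsubtype, type_subrel_add_compl r Y hdc, hrtype]
    have hδ : Ordinal.type (Subrel r (· ∈ Yᶜ)) ≤ κ.ord := by
      have : κ.ord * α + Ordinal.type (Subrel r (· ∈ Yᶜ)) ≤ κ.ord * α + κ.ord := by
        rw [hsum, ← mul_add_one]; exact h2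
      exact le_of_add_le_add_left this
    have : ordL X ≤ κ.ord * α :=
      hX_le.trans <| (add_le_add_right hδ _).trans (mu_add_ord_le hκ hμlt)
    exact absurd (this.trans_lt hlt) (lt_irrefl _)
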